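/- Let φ be a real-valued Schwartz function on ℝ with φ(x) > 0 for every x, let ν ∈ (0,2), let h ∈ L²(ℝ), and set f(x) = φ(x)^ν·h(x) (the source condition) and g = φ·f. Let c_ν = sup_{s ≥ 0} s^ν/(s² + 1), which is finite. Then for every λ > 0, ‖R_λ g − f‖_{L²} ≤ c_ν · λ^{ν/2} · ‖h‖_{L²}. -/

import Mathlib

open MeasureTheory

/-- The Tikhonov-regularised reconstruction operator
`(R_λ g)(x) = φ(x)·g(x)/(φ(x)² + λ)`. -/
noncomputable def tikhonovRecon (φ : SchwartzMap ℝ ℝ) (lam : ℝ) (g : ℝ → ℝ) : ℝ → ℝ :=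
  fun x => φ x * g x / ((φ x) ^ 2 + lam)

/-- Source-condition rate for Tikhonov reconstruction: if `φ > 0`, `ν ∈ (0,2)`,
`h ∈ L²(ℝ)`, `f = φ^ν·h` and `g = φ·f`, then with
`c_ν = sup_{s ≥ 0} s^ν/(s²+1)` (a finite constant), for every `λ > 0`,
`‖R_λ g − f‖_{L²} ≤ c_ν · λ^{ν/2} · ‖h‖_{L²}`. -/
theorem tikhonovRecon_source_rate (φ : SchwartzMap ℝ ℝ) (hφ : ∀ x, 0 < φ x)
    (ν : ℝ) (hν : ν ∈ Set.Ioo (0 : ℝ) 2) (h : ℝ → ℝ)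
    (hh : MemLp h 2 (volume : Measure ℝ)) (lam : ℝ) (hlam : 0 < lam) :
    BddAbove (Set.range fun s : Set.Ici (0 : ℝ) => (s : ℝ) ^ ν / ((s : ℝ) ^ 2 + 1)) ∧
    eLpNorm
        (fun x => tikhonovRecon φ lam (fun y => φ y * ((φ y) ^ ν * h y)) x
          - (φ x) ^ ν * h x) 2 (volume : Measure ℝ)
      ≤ ENNReal.ofReal
          ((⨆ s : Set.Ici (0 : ℝ), (s : ℝ) ^ ν / ((s : ℝ) ^ 2 + 1)) * lam ^ (ν / 2))
        * eLpNorm h 2 (volume : Measure ℝ) := by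
  obtain ⟨hν0, hν2⟩ := hν
  have hbdd : BddAbove (Set.range fun s : Set.Ici (0 : ℝ) =>
      (s : ℝ) ^ ν / ((s : ℝ) ^ 2 + 1)) := by
    refine ⟨1, ?_⟩
    rintro _ ⟨⟨s, hs⟩, rfl⟩
    simp only [Set.mem_Ici] at hs
    show s ^ ν / (s ^ 2 + 1) ≤ 1
    have h1 : (0:ℝ) < s ^ 2 + 1 := by positivity
    rw [div_le_one h1]
    rcases le_or_gt s 1 with hle | hgt
    · have := Real.rpow_le_one hs hle hν0.le
      nlinarith
    · have h2 : s ^ ν ≤ s ^ (2:ℝ) := Real.rpow_le_rpow_of_exponent_le hgt.le hν2.le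
      have h3 : s ^ (2:ℝ) = s ^ (2:ℕ) := by
        rw [← Real.rpow_natCast]; norm_num
      rw [h3] at h2
      nlinarith
  refine ⟨hbdd, ?_⟩
  set c := ⨆ s : Set.Ici (0:ℝ), (s : ℝ) ^ ν / ((s : ℝ) ^ 2 + 1) with hc
  have hc0 : 0 ≤ c := by
    have := le_ciSup hbdd (⟨0, Set.self_mem_Ici⟩ : Set.Ici (0:ℝ))
    simpa [Real.zero_rpow hν0.ne'] using this
  set B := c * lam ^ (ν / 2) with hB
  have hB0 : 0 ≤ B := mul_nonneg hc0 (Real.rpow_nonneg hlam.le _)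
  -- pointwise bound
  have key : ∀ x, ‖tikhonovRecon φ lam (fun y => φ y * ((φ y) ^ ν * h y)) x
      - (φ x) ^ ν * h x‖ ≤ ‖B * h x‖ := by
    intro x
    set p := φ x with hp
    have hp0 : 0 < p := hφ x
    have hD : 0 < p ^ 2 + lam := by positivity
    have hdiff : tikhonovRecon φ lam (fun y => φ y * ((φ y) ^ ν * h y)) x
        - (φ x) ^ ν * h x = -((lam * p ^ ν / (p ^ 2 + lam)) * h x) := by
      simp only [tikhonovRecon, ← hp]
      field_simp
      ring
    rw [hdiff, norm_neg, norm_mul, norm_mul]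
    have hcoef : lam * p ^ ν / (p ^ 2 + lam) ≤ B := by
      -- use sup at s = p / lam^(1/2)
      have ht0 : 0 < lam ^ ((1:ℝ)/2) := Real.rpow_pos_of_pos hlam _
      set t := lam ^ ((1:ℝ)/2) with htd
      have ht2 : t ^ (2:ℕ) = lam := by
        rw [htd, ← Real.rpow_natCast (lam ^ ((1:ℝ)/2)) 2, ← Real.rpow_mul hlam.le]
        norm_num
      have htν : t ^ ν = lam ^ (ν / 2) := by
        rw [htd, ← Real.rpow_mul hlam.le]
        ring_nf
      have hs : (0:ℝ) ≤ p / t := by positivity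
      have hsup := le_ciSup hbdd (⟨p / t, hs⟩ : Set.Ici (0:ℝ))
      simp only [← hc] at hsup
      have hval : ((p / t : ℝ)) ^ ν / ((p / t : ℝ) ^ 2 + 1)
          = (p ^ ν * lam) / (lam ^ (ν / 2) * (p ^ 2 + lam)) := by
        rw [Real.div_rpow hp0.le ht0.le, htν, div_pow, ht2]
        have hL : (0:ℝ) < lam ^ (ν / 2) := Real.rpow_pos_of_pos hlam _
        field_simp
      rw [hval] at hsup
      have hL : 0 < lam ^ (ν / 2) := Real.rpow_pos_of_pos hlam _
      rw [div_le_iff₀ (by positivity)] at hsup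
      rw [div_le_iff₀ hD, hB]
      nlinarith [hsup]
    calc ‖lam * p ^ ν / (p ^ 2 + lam)‖ * ‖h x‖
        = (lam * p ^ ν / (p ^ 2 + lam)) * ‖h x‖ := by
          rw [Real.norm_of_nonneg (by positivity)]
      _ ≤ B * ‖h x‖ := by
          exact mul_le_mul_of_nonneg_right hcoef (norm_nonneg _)
      _ = ‖B‖ * ‖h x‖ := by rw [Real.norm_of_nonneg hB0]
  calc eLpNorm (fun x => tikhonovRecon φ lam (fun y => φ y * ((φ y) ^ ν * h y)) x
          - (φ x) ^ ν * h x) 2 volume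
      ≤ eLpNorm (fun x => B * h x) 2 volume := eLpNorm_mono key
    _ = ‖B‖₊ * eLpNorm h 2 volume := by
        have : (fun x => B * h x) = B • h := rfl
        rw [this, eLpNorm_const_smul, enorm_eq_nnnorm]
    _ = ENNReal.ofReal B * eLpNorm h 2 volume := by
        rw [← Real.enorm_eq_ofReal hB0, enorm_eq_nnnorm]
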